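/- In the lattice I_{1,2} with orthogonal basis h, e₁, e₂ (h² = 1, eᵢ² = −1), the orthogonal complement of the vector v = 3h − e₁ − e₂ (which satisfies v·v = 7) is spanned by h − 2e₁ − e₂ and e₁ − e₂, and is isomorphic to the negative of the linear plumbing lattice Λ(2,4), i.e., the rank-2 lattice with Gram matrix [[−2, 1], [1, −4]]. -/

import Mathlib

open BigOperators Matrix

/-- Gram matrix of the odd unimodular lattice `I_{1,n-1}`: diagonal `(1, -1, …, -1)`. -/
def hypMat (n : ℕ) : Matrix (Fin n) (Fin n) ℤ :=
  Matrix.diagonal fun i => if (i : ℕ) = 0 then 1 else -1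

/-- The bilinear form of `I_{1,n-1}` on `Fin n → ℤ`. -/
def bilin (n : ℕ) (x y : Fin n → ℤ) : ℤ :=
  x ⬝ᵥ (hypMat n).mulVec y

/-- The orthogonal complement of `v` in `I_{1,n-1}`. -/
def perp (n : ℕ) (v : Fin n → ℤ) : Submodule ℤ (Fin n → ℤ) where
  carrier := {x | bilin n v x = 0}
  add_mem' := by
    intro a b ha hb
    simp only [Set.mem_setOf_eq, bilin, Matrix.mulVec_add, dotProduct_add] at *
    omega
  zero_mem' := by simp [bilin]
  smul_mem' := by
    intro c x hx
    simp only [Set.mem_setOf_eq, bilin] at *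
    rw [Matrix.mulVec_smul, dotProduct_smul, hx, smul_zero]

/-- In `I_{1,2}`, the orthogonal complement of `v = 3h − e₁ − e₂`
(which has `v·v = 7`) is spanned by `h − 2e₁ − e₂` and `e₁ − e₂`, and is isomorphic to
`−Λ(2,4)`: the two spanning vectors have squares `−4` and `−2` and pairing `1`. -/
theorem stmt9 (v g₁ g₂ : Fin 3 → ℤ)
    (hv : v = ![3, -1, -1]) (hg₁ : g₁ = ![1, -2, -1]) (hg₂ : g₂ = ![0, 1, -1]) :
    bilin 3 v v = 7 ∧
    perp 3 v = Submodule.span ℤ {g₁, g₂} ∧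
    bilin 3 g₂ g₂ = -2 ∧ bilin 3 g₂ g₁ = 1 ∧ bilin 3 g₁ g₂ = 1 ∧ bilin 3 g₁ g₁ = -4 := by
  subst hv hg₁ hg₂
  have hb : ∀ x : Fin 3 → ℤ, bilin 3 ![3,-1,-1] x = 3*x 0 + x 1 + x 2 := by
    intro x
    simp [bilin, hypMat, Matrix.mulVec, dotProduct, Fin.sum_univ_three,
      Matrix.diagonal]
  refine ⟨by decide, ?_, by decide, by decide, by decide, by decide⟩
  apply le_antisymm
  · intro x hx
    have h0 : bilin 3 ![3,-1,-1] x = 0 := hx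
    rw [hb] at h0
    have hxeq : x = x 0 • ![1,-2,-1] + (x 1 + 2 * x 0) • ![0,1,-1] := by
      funext i
      fin_cases i <;> simp [Matrix.cons_val_zero, Matrix.cons_val_one] <;> omega
    rw [hxeq]
    exact Submodule.add_mem _
      (Submodule.smul_mem _ _ (Submodule.subset_span (Or.inl rfl)))
      (Submodule.smul_mem _ _ (Submodule.subset_span (Or.inr rfl)))
  · rw [Submodule.span_le]
    rintro x (rfl | rfl) <;> · show bilin 3 _ _ = 0; rw [hb]; decide
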